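/- Let L be a finite meet-semilattice, A an associative unital ring, and e : L → A a function satisfying e(a)·e(b) = e(a ⊓ b) for all a, b ∈ L (in particular each e(a) is an idempotent). Then there exists a unique family f : L → A such that f(a)·f(b) = 0 whenever a ≠ b and such that for every a ∈ L one has e(a) = Σ_{b ≤ a} f(b); moreover each f(a) is an idempotent. -/
import Mathlib


open Finset

section Aux

variable {L : Type*} [SemilatticeInf L] [Fintype L] [DecidableEq L]
  [DecidableRel ((· ≤ ·) : L → L → Prop)]
  {A : Type*} [Ring A]

/-- strict-below finset -/
private def below (a : L) : Finset L := Finset.univ.filter (fun b => b ≤ a ∧ b ≠ a)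

private lemma mem_below {a b : L} : b ∈ below a ↔ b < a := by
  simp [below, lt_iff_le_and_ne]

private instance : WellFoundedRelation L := ⟨(· < ·), wellFounded_lt⟩

noncomputable def rf (e : L → A) : L → A := fun a =>
  e a - ∑ b ∈ (below a).attach, rf e b.1
termination_by a => a
decreasing_by
  exact mem_below.1 b.2

lemma rf_def (e : L → A) (a : L) :
    rf e a = e a - ∑ b ∈ below a, rf e b := by
  rw [rf, Finset.sum_attach]

lemma filter_le_eq (a : L) :
    Finset.univ.filter (fun b => b ≤ a) = insert a (below a) := by
  ext b
  simp only [Finset.mem_filter, Finset.mem_univ, true_and, Finset.mem_insert, mem_below]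
  constructor
  · intro h; rcases eq_or_lt_of_le h with h | h
    · exact Or.inl h
    · exact Or.inr h
  · rintro (rfl | h); · exact le_rfl
    · exact h.le

lemma a_not_mem_below (a : L) : a ∉ below a := by simp [mem_below]

lemma rf_sum (e : L → A) (a : L) :
    e a = ∑ b ∈ Finset.univ.filter (fun b => b ≤ a), rf e b := by
  rw [filter_le_eq, Finset.sum_insert (a_not_mem_below a), rf_def]
  abel

variable (e : L → A) (he : ∀ a b : L, e a * e b = e (a ⊓ b))
include he

lemma rf_comm (c : L) : ∀ a : L, e c * rf e a = rf e a * e c := by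
  intro a
  induction a using WellFoundedLT.induction with
  | ind a ih =>
    rw [rf_def, mul_sub, sub_mul, mul_sum, sum_mul]
    congr 1
    · rw [he, he, inf_comm]
    · exact Finset.sum_congr rfl fun b hb => ih b (mem_below.1 hb)

lemma rf_absorb (c : L) : ∀ a : L, a ≤ c → e c * rf e a = rf e a := by
  intro a
  induction a using WellFoundedLT.induction with
  | ind a ih =>
    intro hac
    rw [rf_def, mul_sub, mul_sum]
    congr 1
    · rw [he, inf_eq_right.2 hac]
    · exact Finset.sum_congr rfl fun b hb =>
        ih b (mem_below.1 hb) ((mem_below.1 hb).le.trans hac)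

lemma rf_kill (c : L) : ∀ a : L, ¬ a ≤ c → e c * rf e a = 0 := by
  intro a
  induction a using WellFoundedLT.induction with
  | ind a ih =>
    intro hac
    rw [rf_def, mul_sub, mul_sum]
    have hsum : ∑ b ∈ below a, e c * rf e b
        = ∑ b ∈ (below a).filter (fun b => b ≤ c), rf e b := by
      rw [Finset.sum_filter]
      refine Finset.sum_congr rfl fun b hb => ?_
      by_cases hbc : b ≤ c
      · rw [if_pos hbc, rf_absorb e he c b hbc]
      · rw [if_neg hbc, ih b (mem_below.1 hb) hbc]
    rw [hsum, he]
    have hfil : Finset.univ.filter (fun b => b ≤ c ⊓ a)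
        = (below a).filter (fun b => b ≤ c) := by
      ext b
      simp only [Finset.mem_filter, Finset.mem_univ, true_and, mem_below, le_inf_iff,
        lt_iff_le_and_ne]
      constructor
      · rintro ⟨hbc, hba⟩
        refine ⟨⟨hba, ?_⟩, hbc⟩
        rintro rfl; exact hac hbc
      · rintro ⟨⟨hba, _⟩, hbc⟩; exact ⟨hbc, hba⟩
    rw [rf_sum e (c ⊓ a), hfil, sub_self]

lemma rf_comm2 (a : L) : ∀ b : L, rf e a * rf e b = rf e b * rf e a := by
  intro b
  induction b using WellFoundedLT.induction with
  | ind b ih =>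
    rw [rf_def e b, mul_sub, sub_mul, mul_sum, sum_mul]
    congr 1
    · exact (rf_comm e he b a).symm
    · exact Finset.sum_congr rfl fun c hc => ih c (mem_below.1 hc)

lemma rf_orth {a b : L} (hab : a ≠ b) : rf e a * rf e b = 0 := by
  have key : ∀ x y : L, ¬ x ≤ y → rf e x * rf e y = 0 := by
    intro x y hxy
    have h1 : rf e x * rf e y = rf e x * (e y * rf e y) := by
      rw [rf_absorb e he y y le_rfl]
    rw [h1, ← mul_assoc, ← rf_comm e he y x, rf_kill e he y x hxy, zero_mul]
  by_cases h : a ≤ b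
  · have hba : ¬ b ≤ a := fun h' => hab (le_antisymm h h')
    rw [rf_comm2 e he a b, key b a hba]
  · exact key a b h

end Aux

/-- Lemma-Definition 4.2.7 (abstract form): given a multiplicative-to-meet family of
idempotents `e : L → A` on a finite meet-semilattice (`e a * e b = e (a ⊓ b)`), there is a
unique family `f : L → A` of pairwise orthogonal elements with `e a = Σ_{b ≤ a} f b` for all
`a`; moreover each `f a` is an idempotent (the "reduced idempotents"). -/
theorem reduced_idempotents_exist_unique
    (L : Type*) [SemilatticeInf L] [Fintype L]
    [DecidableEq L] [DecidableRel ((· ≤ ·) : L → L → Prop)]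
    (A : Type*) [Ring A] (e : L → A)
    (he : ∀ a b : L, e a * e b = e (a ⊓ b)) :
    (∃! f : L → A, (∀ a b : L, a ≠ b → f a * f b = 0) ∧
        (∀ a : L, e a = ∑ b ∈ Finset.univ.filter (fun b => b ≤ a), f b)) ∧
      (∀ f : L → A,
        ((∀ a b : L, a ≠ b → f a * f b = 0) ∧
          (∀ a : L, e a = ∑ b ∈ Finset.univ.filter (fun b => b ≤ a), f b)) →
        ∀ a : L, IsIdempotentElem (f a)) := by
  constructor
  · refine ⟨rf e, ⟨fun a b hab => rf_orth e he hab, fun a => rf_sum e a⟩, ?_⟩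
    rintro g ⟨-, hg⟩
    funext a
    induction a using WellFoundedLT.induction with
    | ind a ih =>
      have h1 : e a = g a + ∑ b ∈ below a, g b := by
        rw [hg a, filter_le_eq, Finset.sum_insert (a_not_mem_below a)]
      have h2 : g a = e a - ∑ b ∈ below a, g b := by rw [h1]; abel
      rw [h2, rf_def]
      congr 1
      exact Finset.sum_congr rfl fun b hb => ih b (mem_below.1 hb)
  · rintro f ⟨horth, hsum⟩ a
    have key : ∀ a b : L, b ≤ a → e a * f b = f b * f b := by
      intro a b hba
      rw [hsum a, Finset.sum_mul]
      rw [Finset.sum_eq_single b]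
      · intro c hc hcb; exact horth c b hcb
      · intro hb; exact absurd (by simp [hba]) hb
    induction a using WellFoundedLT.induction with
    | ind a ih =>
      have h1 : e a * e a = e a := by rw [he, inf_idem]
      have h2 : ∑ b ∈ Finset.univ.filter (fun b => b ≤ a), e a * f b
          = ∑ b ∈ Finset.univ.filter (fun b => b ≤ a), f b := by
        rw [← Finset.mul_sum, ← hsum a, h1, hsum a]
      have h3 : ∑ b ∈ Finset.univ.filter (fun b => b ≤ a), f b * f b
          = ∑ b ∈ Finset.univ.filter (fun b => b ≤ a), f b := by
        rw [← h2]
        exact Finset.sum_congr rfl fun b hb => (key a b (by simpa using hb)).symm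
      rw [filter_le_eq, Finset.sum_insert (a_not_mem_below a),
        Finset.sum_insert (a_not_mem_below a)] at h3
      have h4 : ∑ b ∈ below a, f b * f b = ∑ b ∈ below a, f b :=
        Finset.sum_congr rfl fun b hb => ih b (mem_below.1 hb)
      have : f a * f a = f a := by
        have := h3
        rw [h4] at this
        exact add_right_cancel this
      exact this
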